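/- If a regular bracket structure u = u₁⋯u_n agrees with the word w = w' x^ε (last symbol x^ε), then some regular bracket structure agrees with the cyclic conjugate x^ε w'. Specifically, if u_n = *, then u_n u₁⋯u_{n-1} works; if u_n = ] with matching bracket u_i = [, then [u₁⋯u_{i-1}]u_{i+1}⋯u_{n-1} works. -/

import Mathlib

/-- The alphabet `{[, *, ]}` of regular bracket structures. -/
inductive BSym
  | lbrack
  | star
  | rbrack
deriving DecidableEq

/-- `Agrees u w` means `u` is a regular bracket structure agreeing with the
word `w` over `X ∪ X⁻¹` (a letter is a pair `(x, ε)` with `ε : Bool`):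
stars match positive letters, and matching brackets (arising from the rule
`a ↦ [a]`) match pairs of inverse letters. -/
inductive Agrees {X : Type*} : List BSym → List (X × Bool) → Prop
  | nil : Agrees [] []
  | star (x : X) : Agrees [BSym.star] [(x, true)]
  | brack {u w} (x : X) (ε : Bool) (h : Agrees u w) :
      Agrees ([BSym.lbrack] ++ u ++ [BSym.rbrack]) ([(x, ε)] ++ w ++ [(x, !ε)])
  | append {u₁ w₁ u₂ w₂} (h₁ : Agrees u₁ w₁) (h₂ : Agrees u₂ w₂) :
      Agrees (u₁ ++ u₂) (w₁ ++ w₂)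

/-- Key structural lemma. -/
lemma agrees_last_key {X : Type*} {u w} (h : Agrees u w) :
    ∀ w' (x : X) (ε : Bool), w = w' ++ [(x, ε)] →
      (ε = true ∧ ∃ v, Agrees v w') ∨
      (∃ p q, w' = p ++ [(x, !ε)] ++ q ∧ (∃ vp, Agrees vp p) ∧ ∃ vq, Agrees vq q) := by
  induction h with
  | nil => intro w' x ε he; simp at he
  | star y =>
    intro w' x ε he
    rcases w' with _ | ⟨a, w'⟩
    · obtain ⟨h1, h2⟩ : y = x ∧ true = ε := by simpa using he
      exact Or.inl ⟨h2.symm, [], Agrees.nil⟩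
    · exfalso
      have := congrArg List.length he
      simp at this
  | @brack u₀ w₀ y δ h ih =>
    intro w' x ε he
    have he' : ((y, δ) :: w₀) ++ [(y, !δ)] = w' ++ [(x, ε)] := by
      simpa using he
    obtain ⟨h1, h2⟩ := List.append_inj' he' rfl
    obtain ⟨hx, hε⟩ : y = x ∧ δ = !ε := by simpa using h2
    refine Or.inr ⟨[], w₀, ?_, ⟨[], Agrees.nil⟩, ⟨_, h⟩⟩
    simp [← h1, hx, hε]
  | @append u₁ w₁ u₂ w₂ h₁ h₂ ih₁ ih₂ =>
    intro w' x ε he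
    rcases w₂.eq_nil_or_concat with rfl | ⟨w₂', b, rfl⟩
    · simp only [List.append_nil] at he
      exact ih₁ w' x ε he
    · rw [List.concat_eq_append, ← List.append_assoc] at he
      obtain ⟨h1, h2⟩ := List.append_inj' he rfl
      obtain rfl : b = (x, ε) := by simpa using h2
      subst h1
      rcases ih₂ w₂' x ε List.concat_eq_append with ⟨rfl, v, hv⟩ | ⟨p, q, rfl, ⟨vp, hvp⟩, ⟨vq, hvq⟩⟩
      · exact Or.inl ⟨rfl, _, h₁.append hv⟩
      · exact Or.inr ⟨w₁ ++ p, q, by simp, ⟨_, h₁.append hvp⟩, ⟨_, hvq⟩⟩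


/-- If an RBS agrees with `w' x^ε`, then some RBS agrees with the cyclic
conjugate `x^ε w'`. -/
theorem rbs_agrees_cyclic_conjugate {X : Type*}
    (u : List BSym) (w' : List (X × Bool)) (x : X) (ε : Bool)
    (h : Agrees u (w' ++ [(x, ε)])) :
    ∃ u' : List BSym, Agrees u' ((x, ε) :: w') := by
  rcases agrees_last_key h w' x ε rfl with ⟨rfl, v, hv⟩ | ⟨p, q, rfl, ⟨vp, hvp⟩, ⟨vq, hvq⟩⟩
  · exact ⟨_, (Agrees.star x).append hv⟩
  · have hb := (Agrees.brack x ε hvp).append hvq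
    have he : (x, ε) :: (p ++ [(x, !ε)] ++ q) = ([(x, ε)] ++ p ++ [(x, !ε)]) ++ q := by simp
    exact ⟨_, he ▸ hb⟩
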